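/- Let n and N be nonnegative integers with N ≤ 2n−3, and let f_0, …, f_N be positive integers such that f_0 = 2, f_i = f_{i−1} ± 1 for 1 ≤ i ≤ N, and f_i ≤ 2n−i−2 for 0 ≤ i ≤ N. Then the sequence extends to positive integers f_0, …, f_{2n−3} satisfying f_i = f_{i−1} ± 1 for 1 ≤ i ≤ 2n−3, f_i ≤ 2n−i−2 for 0 ≤ i ≤ 2n−3, and f_{2n−3} = 1. -/
import Mathlib


/-- a valid partial diagonal sequence extends to a full diagonal sequence
of length `2n-2` ending at `1`. -/
theorem diagonal_extends (n N : ℕ) (hN : (N : ℤ) ≤ 2 * (n : ℤ) - 3)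
    (f : ℤ → ℤ)
    (hpos : ∀ i : ℤ, 0 ≤ i → i ≤ (N : ℤ) → 0 < f i)
    (h0 : f 0 = 2)
    (hstep : ∀ i : ℤ, 1 ≤ i → i ≤ (N : ℤ) → f i = f (i - 1) + 1 ∨ f i = f (i - 1) - 1)
    (hbd : ∀ i : ℤ, 0 ≤ i → i ≤ (N : ℤ) → f i ≤ 2 * (n : ℤ) - i - 2) :
    ∃ g : ℤ → ℤ,
      (∀ i : ℤ, 0 ≤ i → i ≤ (N : ℤ) → g i = f i) ∧
      (∀ i : ℤ, 0 ≤ i → i ≤ 2 * (n : ℤ) - 3 → 0 < g i) ∧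
      (∀ i : ℤ, 1 ≤ i → i ≤ 2 * (n : ℤ) - 3 →
        g i = g (i - 1) + 1 ∨ g i = g (i - 1) - 1) ∧
      (∀ i : ℤ, 0 ≤ i → i ≤ 2 * (n : ℤ) - 3 → g i ≤ 2 * (n : ℤ) - i - 2) ∧
      g (2 * (n : ℤ) - 3) = 1 := by
  -- parity invariant: f i + i is always even
  have hpar : ∀ m : ℕ, (m : ℤ) ≤ (N : ℤ) → Even (f m + m) := by
    intro m
    induction m with
    | zero => intro _; rw [Int.natCast_zero, h0]; exact ⟨1, by ring⟩
    | succ j ih =>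
      intro hle
      push_cast at hle ⊢
      have hs := hstep ((j : ℤ) + 1) (by omega) (by omega)
      obtain ⟨k, hk⟩ := ih (by omega)
      simp only [add_sub_cancel_right] at hs
      rcases hs with h | h
      · exact ⟨k + 1, by omega⟩
      · exact ⟨k, by omega⟩
  obtain ⟨k, hk⟩ := hpar N le_rfl
  have hposN : 0 < f N := hpos N (by positivity) le_rfl
  have hbdN : f N ≤ 2 * (n : ℤ) - N - 2 := hbd N (by positivity) le_rfl
  refine ⟨fun i => if i ≤ (N : ℤ) then f i else
      min (f N + (i - N)) (2 * (n : ℤ) - 2 - i), ?_, ?_, ?_, ?_, ?_⟩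
  · intro i _ hi
    simp [hi]
  · intro i h0i hi
    by_cases hiN : i ≤ (N : ℤ)
    · simpa [hiN] using hpos i h0i hiN
    · simp only [if_neg hiN]
      push_neg at hiN
      omega
  · intro i h1 h2
    by_cases hiN : i ≤ (N : ℤ)
    · have h' : i - 1 ≤ (N : ℤ) := by omega
      simpa [hiN, h', if_pos] using hstep i h1 hiN
    · push_neg at hiN
      by_cases hiN' : i - 1 ≤ (N : ℤ)
      · have hiq : i - 1 = (N : ℤ) := by omega
        simp only [if_neg (not_le.mpr hiN), if_pos hiN', hiq]
        omega
      · simp only [if_neg (not_le.mpr hiN), if_neg hiN']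
        push_neg at hiN'
        omega
  · intro i h0i hi
    by_cases hiN : i ≤ (N : ℤ)
    · simpa [hiN] using (by
        have := hbd i h0i hiN; omega : f i ≤ 2 * (n : ℤ) - i - 2)
    · simp only [if_neg hiN]
      omega
  · have hle : ¬(2 * (n : ℤ) - 3 ≤ N) ∨ (2 * (n : ℤ) - 3 ≤ N) := (em _).symm
    by_cases hc : 2 * (n : ℤ) - 3 ≤ (N : ℤ)
    · have hq : (N : ℤ) = 2 * (n : ℤ) - 3 := by omega
      simp only [if_pos hc, ← hq]
      omega
    · simp only [if_neg hc]
      push_neg at hc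
      omega
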